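/- Let U be a nonempty finite type (of feasible tours), V a finite type (of customers), z : U → Finset V a map assigning to each tour its set of visited customers, c : U → ℝ a routing-cost function with c(u) ≥ 0 for all u ∈ U, ū ∈ U a target tour, and M ∈ ℝ with M > c(ū). Define prizes θ : V → ℝ by θ(i) = M if i ∈ z(ū) and θ(i) = −M otherwise. Then every u* ∈ U maximizing the prize-collecting objective u ↦ (∑_{i ∈ z(u)} θ(i)) − c(u) over U satisfies z(u*) = z(ū) and c(u*) ≤ c(ū). -/
import Mathlib


/-- Combinatorial core of Proposition 1: with prizes `+M` on the customers visited by the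
target tour `ubar` and `-M` elsewhere, where `M > c ubar` and all routing costs are
nonnegative, any maximizer of the prize-collecting objective visits exactly the customers
of `ubar`, at no greater routing cost. -/
theorem stmt_0 {U V : Type*} [Fintype U] [Nonempty U] [Fintype V] [DecidableEq V]
    (z : U → Finset V) (c : U → ℝ) (hc : ∀ u, 0 ≤ c u)
    (ubar : U) (M : ℝ) (hM : c ubar < M)
    (θ : V → ℝ) (hθ : ∀ i, θ i = if i ∈ z ubar then M else -M)
    (ustar : U)
    (hopt : ∀ u : U, (∑ i ∈ z u, θ i) - c u ≤ (∑ i ∈ z ustar, θ i) - c ustar) :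
    z ustar = z ubar ∧ c ustar ≤ c ubar := by
  have hMpos : 0 < M := lt_of_le_of_lt (hc ubar) hM
  have hsum : ∀ s : Finset V, ∑ i ∈ s, θ i
      = M * (s ∩ z ubar).card - M * (s \ z ubar).card := by
    intro s
    have h1 : ∑ i ∈ s, θ i
        = ∑ i ∈ s.filter (· ∈ z ubar), θ i + ∑ i ∈ s.filter (¬ · ∈ z ubar), θ i :=
      (Finset.sum_filter_add_sum_filter_not s _ _).symm
    have h2 : ∑ i ∈ s.filter (· ∈ z ubar), θ i = M * (s ∩ z ubar).card := by
      rw [Finset.sum_congr rfl (fun i hi => by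
        rw [hθ i, if_pos (Finset.mem_filter.mp hi).2]), Finset.sum_const,
        Finset.filter_mem_eq_inter]
      ring
    have h3 : ∑ i ∈ s.filter (¬ · ∈ z ubar), θ i = -(M * (s \ z ubar).card) := by
      rw [Finset.sum_congr rfl (fun i hi => by
        rw [hθ i, if_neg (Finset.mem_filter.mp hi).2]), Finset.sum_const]
      have : s.filter (¬ · ∈ z ubar) = s \ z ubar := by
        ext i; simp [Finset.mem_sdiff]
      rw [this]; ring
    rw [h1, h2, h3]; ring
  set a : ℕ := (z ustar ∩ z ubar).card with ha
  set b : ℕ := (z ustar \ z ubar).card with hb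
  set k : ℕ := (z ubar).card with hk
  have hkey := hopt ubar
  rw [hsum (z ubar), hsum (z ustar), Finset.inter_self, Finset.sdiff_self] at hkey
  simp only [Finset.card_empty, Nat.cast_zero, mul_zero, sub_zero] at hkey
  -- hkey : M * k - c ubar ≤ M * a - M * b - c ustar
  have hak : a ≤ k := Finset.card_le_card (Finset.inter_subset_right)
  have habk : M * k - M * a + M * b < M := by
    nlinarith [hc ustar, hc ubar]
  have hkab : (k : ℝ) - a + b < 1 := by
    have := (mul_lt_mul_iff_right₀ hMpos).mp (by linarith : M * ((k : ℝ) - a + b) < M * 1)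
    linarith
  have hkab' : k - a + b = 0 := by
    have : ((k - a + b : ℕ) : ℝ) < 1 := by
      push_cast [Nat.cast_sub hak] at *
      linarith
    exact_mod_cast Nat.lt_one_iff.mp (by exact_mod_cast this)
  have hb0 : b = 0 := by omega
  have hka : k = a := by omega
  have h1 : z ustar ⊆ z ubar := by
    rw [← Finset.sdiff_eq_empty_iff_subset]
    exact Finset.card_eq_zero.mp hb0
  have h2 : z ustar ∩ z ubar = z ubar := by
    apply Finset.eq_of_subset_of_card_le Finset.inter_subset_right
    omega
  have hzeq : z ustar = z ubar := by
    apply Finset.Subset.antisymm h1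
    intro i hi
    have : i ∈ z ustar ∩ z ubar := by rw [h2]; exact hi
    exact (Finset.mem_inter.mp this).1
  refine ⟨hzeq, ?_⟩
  have := hopt ubar
  rw [hzeq] at this
  linarith
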